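/- Let n and m be nonzero integers which are isocratic but not coprime, let p be a prime dividing n·m, and let q be a prime dividing gcd(n,m) (possibly q = p). Then there exists a representation ρ of BS(n,m) on the 𝔽_p-vector space (Fin q → ZMod p) ≅ 𝔽_p^q such that the second group cohomology H²(BS(n,m), ρ) is nontrivial. -/

import Mathlib

/-- The single relator `a^n t a^{-m} t⁻¹` of the Baumslag–Solitar group `BS(n,m)`,
with generator `0 = a` and `1 = t`. -/
def BSRel (n m : ℤ) : Set (FreeGroup (Fin 2)) :=
  {FreeGroup.of 0 ^ n * FreeGroup.of 1 * FreeGroup.of 0 ^ (-m) * (FreeGroup.of 1)⁻¹}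

/-- The Baumslag–Solitar group `BS(n,m) = ⟨a, t ∣ a^n = t a^m t⁻¹⟩`. -/
abbrev BS (n m : ℤ) := PresentedGroup (BSRel n m)

/-- The first generator `a` of `BS(n,m)`. -/
abbrev BS.a (n m : ℤ) : BS n m := PresentedGroup.of 0

set_option linter.unusedSectionVars false

namespace BSH2


open Finset
open Fin.NatCast

section FunOps

variable (R : Type) [CommRing R] (N : Type) [AddCommGroup N] [Module R N]
variable (β : Type) [AddCommGroup β] [Module ℚ β]

/-- Precomposition with translation by `b`, as a linear automorphism of `β → N`. -/
def preT (b : β) : (β → N) ≃ₗ[R] (β → N) where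
  toFun P := fun x => P (x - b)
  invFun P := fun x => P (x + b)
  map_add' _ _ := rfl
  map_smul' _ _ := rfl
  left_inv P := funext fun x => by show P (x + b - b) = P x; rw [add_sub_cancel_right]
  right_inv P := funext fun x => by show P (x - b + b) = P x; rw [sub_add_cancel]

/-- `preT` as a monoid hom. -/
def preTHom : Multiplicative β →* ((β → N) ≃ₗ[R] (β → N)) :=
  MonoidHom.mk' (fun b => preT R N β b.toAdd) (by
    intro a b
    apply LinearEquiv.ext
    intro P
    funext x
    show P (x - (a.toAdd + b.toAdd)) = P (x - a.toAdd - b.toAdd)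
    rw [sub_sub])

@[simp] lemma preTHom_apply (b : β) (P : β → N) (x : β) :
    preTHom R N β (Multiplicative.ofAdd b) P x = P (x - b) := rfl

/-- Precomposition with scaling by `s⁻¹`, as a linear automorphism of `β → N`. -/
def dilT (s : ℚˣ) : (β → N) ≃ₗ[R] (β → N) where
  toFun P := fun x => P (s⁻¹ • x)
  invFun P := fun x => P (s • x)
  map_add' _ _ := rfl
  map_smul' _ _ := rfl
  left_inv P := funext fun x => by show P (s⁻¹ • s • x) = P x; rw [inv_smul_smul]
  right_inv P := funext fun x => by show P (s • s⁻¹ • x) = P x; rw [smul_inv_smul]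

/-- `dilT` as a monoid hom. -/
def dilTHom : ℚˣ →* ((β → N) ≃ₗ[R] (β → N)) :=
  MonoidHom.mk' (fun s => dilT R N β s) (by
    intro a b
    apply LinearEquiv.ext
    intro P
    funext x
    show P ((a * b)⁻¹ • x) = P (b⁻¹ • a⁻¹ • x)
    rw [mul_inv_rev, mul_smul])

@[simp] lemma dilTHom_apply (s : ℚˣ) (P : β → N) (x : β) :
    dilTHom R N β s P x = P (s⁻¹ • x) := rfl

/-- Postcomposition with a linear automorphism of `N`. -/
def postT (e : N ≃ₗ[R] N) : (β → N) ≃ₗ[R] (β → N) where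
  toFun P := fun x => e (P x)
  invFun P := fun x => e.symm (P x)
  map_add' P Q := funext fun x => by simp
  map_smul' c P := funext fun x => by simp
  left_inv P := funext fun x => by simp
  right_inv P := funext fun x => by simp

/-- `postT` as a monoid hom. -/
def postTHom : (N ≃ₗ[R] N) →* ((β → N) ≃ₗ[R] (β → N)) :=
  MonoidHom.mk' (fun e => postT R N β e) (by
    intro a b
    apply LinearEquiv.ext
    intro P
    funext x
    rfl)

@[simp] lemma postTHom_apply (e : N ≃ₗ[R] N) (P : β → N) (x : β) :
    postTHom R N β e P x = e (P x) := rfl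

lemma post_pre_comm (e : N ≃ₗ[R] N) (b : Multiplicative β) :
    Commute (postTHom R N β e) (preTHom R N β b) := by
  apply LinearEquiv.ext
  intro P
  funext x
  rfl

lemma dil_pre_conj (s : ℚˣ) (b : β) :
    dilTHom R N β s * preTHom R N β (Multiplicative.ofAdd b) * (dilTHom R N β s)⁻¹ =
      preTHom R N β (Multiplicative.ofAdd ((s : ℚ) • b)) := by
  rw [← map_inv]
  apply LinearEquiv.ext
  intro P
  funext x
  show P (s • (s⁻¹ • x - b)) = P (x - (s : ℚ) • b)
  rw [smul_sub, smul_inv_smul]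
  norm_num [Units.smul_def]

end FunOps

/-! ### The rotation of `Fin q → ZMod p` -/

section Sigma

variable (p q : ℕ) [NeZero q]

/-- Rotation of coordinates by `c`. -/
def rotM (c : Fin q) : (Fin q → ZMod p) ≃ₗ[ZMod p] (Fin q → ZMod p) where
  toFun P := fun x => P (x - c)
  invFun P := fun x => P (x + c)
  map_add' _ _ := rfl
  map_smul' _ _ := rfl
  left_inv P := funext fun x => by show P (x + c - c) = P x; rw [add_sub_cancel_right]
  right_inv P := funext fun x => by show P (x - c + c) = P x; rw [sub_add_cancel]

/-- `rotM` as a monoid hom. -/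
def rotMHom : Multiplicative (Fin q) →* ((Fin q → ZMod p) ≃ₗ[ZMod p] (Fin q → ZMod p)) :=
  MonoidHom.mk' (fun c => rotM p q c.toAdd) (by
    intro a b
    apply LinearEquiv.ext
    intro P
    funext x
    show P (x - (a.toAdd + b.toAdd)) = P (x - a.toAdd - b.toAdd)
    rw [sub_sub])

/-- The basic rotation. -/
def sgm : (Fin q → ZMod p) ≃ₗ[ZMod p] (Fin q → ZMod p) := rotMHom p q (Multiplicative.ofAdd 1)

lemma sgm_pow (k : ℕ) : sgm p q ^ k = rotMHom p q (Multiplicative.ofAdd (k : Fin q)) := by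
  rw [sgm, ← map_pow, ← ofAdd_nsmul]
  norm_num [nsmul_eq_mul]

lemma sgm_pow_apply (k : ℕ) (u : Fin q → ZMod p) (l : Fin q) :
    (sgm p q ^ k) u l = u (l - (k : Fin q)) := by
  rw [sgm_pow]
  rfl

lemma sgm_pow_q : sgm p q ^ q = 1 := by
  rw [sgm_pow, Fin.natCast_self]
  exact map_one (rotMHom p q)

lemma sgm_zpow_eq_one {z : ℤ} (hz : (q : ℤ) ∣ z) : sgm p q ^ z = 1 := by
  obtain ⟨c, rfl⟩ := hz
  rw [zpow_mul, zpow_natCast, sgm_pow_q, one_zpow]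

lemma J_apply (u : Fin q → ZMod p) (l : Fin q) :
    (∑ i ∈ range q, (sgm p q ^ i) u) l = ∑ j : Fin q, u j := by
  rw [Finset.sum_apply]
  have h1 : ∀ i ∈ range q, (sgm p q ^ i) u l = u (l - (i : Fin q)) := fun i _ =>
    sgm_pow_apply p q i u l
  rw [Finset.sum_congr rfl h1, ← Fin.sum_univ_eq_sum_range (fun i => u (l - (i : Fin q))) q]
  have h2 : ∀ i : Fin q, u (l - ((i.val : Fin q))) = u (l - i) := fun i => by
    rw [Fin.cast_val_eq_self]
  rw [Finset.sum_congr rfl (fun i _ => h2 i)]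
  exact Fintype.sum_equiv (Equiv.subLeft l) _ _ (fun i => rfl)

end Sigma

/-! ### The `V`-level operators and the relator identity -/

section Lops

variable (p q : ℕ) [NeZero q]
variable (β : Type) [AddCommGroup β] [Module ℚ β]

/-- The operator by which the generator `a` acts on `β → 𝔽_p^q`. -/
def Lgen (b : β) : (β → (Fin q → ZMod p)) ≃ₗ[ZMod p] (β → (Fin q → ZMod p)) :=
  postTHom (ZMod p) (Fin q → ZMod p) β (sgm p q) *
    preTHom (ZMod p) (Fin q → ZMod p) β (Multiplicative.ofAdd b)

lemma Lgen_zpow (b : β) (z : ℤ) :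
    (Lgen p q β b) ^ z = postTHom (ZMod p) (Fin q → ZMod p) β (sgm p q ^ z) *
      preTHom (ZMod p) (Fin q → ZMod p) β (Multiplicative.ofAdd (z • b)) := by
  rw [Lgen, (post_pre_comm (ZMod p) (Fin q → ZMod p) β (sgm p q)
    (Multiplicative.ofAdd b)).mul_zpow, ← map_zpow, ← map_zpow, ofAdd_zsmul]

lemma Lgen_zpow_dvd (b : β) {z : ℤ} (hz : (q : ℤ) ∣ z) :
    (Lgen p q β b) ^ z = preTHom (ZMod p) (Fin q → ZMod p) β (Multiplicative.ofAdd (z • b)) := by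
  rw [Lgen_zpow, sgm_zpow_eq_one p q hz, map_one, one_mul]

variable {n m : ℤ}

/-- The dilation factor `n/m`. -/
def s0 (n m : ℤ) (hn : n ≠ 0) (hm : m ≠ 0) : ℚˣ :=
  Units.mk0 ((n : ℚ) / (m : ℚ)) (by
    apply div_ne_zero <;> exact_mod_cast ‹_›)

lemma relator_gen (hn : n ≠ 0) (hm : m ≠ 0) (hqn : (q : ℤ) ∣ n) (hqm : (q : ℤ) ∣ m) (b : β) :
    (Lgen p q β b) ^ n * dilTHom (ZMod p) (Fin q → ZMod p) β (s0 n m hn hm) *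
      (Lgen p q β b) ^ (-m) *
      (dilTHom (ZMod p) (Fin q → ZMod p) β (s0 n m hn hm))⁻¹ = 1 := by
  set d := dilTHom (ZMod p) (Fin q → ZMod p) β (s0 n m hn hm) with hd
  rw [Lgen_zpow_dvd p q β b hqn, Lgen_zpow_dvd p q β b (dvd_neg.mpr hqm)]
  set pre := preTHom (ZMod p) (Fin q → ZMod p) β with hpre
  have hconj : d * pre (Multiplicative.ofAdd ((-m) • b)) * d⁻¹ =
      pre (Multiplicative.ofAdd (((s0 n m hn hm : ℚ)) • ((-m) • b))) :=
    dil_pre_conj (ZMod p) (Fin q → ZMod p) β _ _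
  have hsm : ((s0 n m hn hm : ℚ)) • ((-m : ℤ) • b) = (-n : ℤ) • b := by
    rw [← Int.cast_smul_eq_zsmul ℚ (-m) b, ← Int.cast_smul_eq_zsmul ℚ (-n) b, smul_smul]
    congr 1
    have hm' : (m : ℚ) ≠ 0 := by exact_mod_cast hm
    show (n : ℚ) / (m : ℚ) * (((-m : ℤ) : ℚ)) = ((-n : ℤ) : ℚ)
    push_cast
    field_simp
  calc pre (Multiplicative.ofAdd (n • b)) * d * pre (Multiplicative.ofAdd ((-m) • b)) * d⁻¹
      = pre (Multiplicative.ofAdd (n • b)) *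
        (d * pre (Multiplicative.ofAdd ((-m) • b)) * d⁻¹) := by
        simp only [mul_assoc]
    _ = pre (Multiplicative.ofAdd (n • b)) *
        pre (Multiplicative.ofAdd ((-n : ℤ) • b)) := by rw [hconj, hsm]
    _ = pre (Multiplicative.ofAdd (n • b) * Multiplicative.ofAdd ((-n : ℤ) • b)) := by
        rw [map_mul]
    _ = 1 := by
        rw [← ofAdd_add, ← add_smul]
        simp

end Lops

/-! ### Affine automorphisms of a module, in translation/linear coordinates -/

section Affine

variable (R : Type) [CommRing R] (X : Type) [AddCommGroup X] [Module R X]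

/-- Linear automorphisms as affine automorphisms, as a monoid hom. -/
def affH : (X ≃ₗ[R] X) →* (X ≃ᵃ[R] X) :=
  MonoidHom.mk' LinearEquiv.toAffineEquiv (by
    intro a b
    apply AffineEquiv.ext
    intro x
    rfl)

/-- The affine automorphism `x ↦ v + L x`. -/
def afe (v : X) (L : X ≃ₗ[R] X) : X ≃ᵃ[R] X :=
  AffineEquiv.constVAdd R X v * affH R X L

lemma afe_apply (v : X) (L : X ≃ₗ[R] X) (x : X) : afe R X v L x = v + L x := rfl

lemma afe_mul (v w : X) (L L' : X ≃ₗ[R] X) :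
    afe R X v L * afe R X w L' = afe R X (v + L w) (L * L') := by
  apply AffineEquiv.ext
  intro x
  show afe R X v L (afe R X w L' x) = _
  rw [afe_apply, afe_apply, afe_apply, map_add, add_assoc]
  rfl

lemma afe_one : afe R X 0 1 = 1 := by
  apply AffineEquiv.ext
  intro x
  rw [afe_apply]
  simp

lemma afe_inv (v : X) (L : X ≃ₗ[R] X) : (afe R X v L)⁻¹ = afe R X (-(L⁻¹ v)) L⁻¹ := by
  apply inv_eq_of_mul_eq_one_right
  rw [afe_mul]
  have h1 : L (L⁻¹ v) = v := L.apply_symm_apply v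
  rw [map_neg, h1, add_neg_cancel, mul_inv_cancel]
  exact afe_one R X

lemma afe_linear (v : X) (L : X ≃ₗ[R] X) : (afe R X v L).linear = L := by
  apply LinearEquiv.ext
  intro x
  rfl

lemma afe_pow (v : X) (L : X ≃ₗ[R] X) (k : ℕ) :
    (afe R X v L) ^ k = afe R X (∑ i ∈ range k, (L ^ i) v) (L ^ k) := by
  induction k with
  | zero => simpa using (afe_one R X).symm
  | succ k ih =>
      rw [pow_succ, ih, afe_mul, sum_range_succ, pow_succ]

lemma afe_transl_zpow (v : X) (z : ℤ) : (afe R X v 1) ^ z = afe R X (z • v) 1 := by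
  have h : ∀ w : X, afe R X w 1 = AffineEquiv.constVAdd R X w := by
    intro w
    rw [afe, map_one, mul_one]
  rw [h, h, ← AffineEquiv.constVAdd_zsmul]

lemma afe_lin_zpow (L : X ≃ₗ[R] X) (z : ℤ) : (afe R X 0 L) ^ z = afe R X 0 (L ^ z) := by
  have h : ∀ L' : X ≃ₗ[R] X, afe R X 0 L' = affH R X L' := by
    intro L'
    apply AffineEquiv.ext
    intro x
    rw [afe_apply, zero_add]
    rfl
  rw [h, h, ← map_zpow]

lemma afe_transl_eq_zero (v : X) (h : afe R X v 1 = 1) : v = 0 := by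
  have := congrArg (fun e : X ≃ᵃ[R] X => e 0) h
  simpa [afe_apply] using this

end Affine

/-! ### Homomorphisms out of the Baumslag–Solitar group -/

section BSgeneral

variable {n m : ℤ}

/-- The relator word. -/
def bsRelWord (n m : ℤ) : FreeGroup (Fin 2) :=
  FreeGroup.of 0 ^ n * FreeGroup.of 1 * FreeGroup.of 0 ^ (-m) * (FreeGroup.of 1)⁻¹

/-- Build a homomorphism out of `BS n m` from images of the two generators satisfying
the relation. -/
def bsHom {G : Type*} [Group G] (P T : G) (h : P ^ n * T * P ^ (-m) * T⁻¹ = 1) :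
    BS n m →* G :=
  PresentedGroup.toGroup (f := fun i => if i = 0 then P else T) (by
    intro r hr
    rw [BSRel, Set.mem_singleton_iff] at hr
    subst hr
    simp only [map_mul, map_zpow, map_inv, FreeGroup.lift_apply_of]
    simpa using h)

@[simp] lemma bsHom_a {G : Type*} [Group G] (P T : G) (h) :
    bsHom (n := n) (m := m) P T h (PresentedGroup.of 0) = P := by
  simp [bsHom, PresentedGroup.toGroup.of]

@[simp] lemma bsHom_t {G : Type*} [Group G] (P T : G) (h) :
    bsHom (n := n) (m := m) P T h (PresentedGroup.of 1) = T := by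
  simp [bsHom, PresentedGroup.toGroup.of]

lemma bs_relator_eq_one (n m : ℤ) :
    (PresentedGroup.of 0 : BS n m) ^ n * PresentedGroup.of 1 *
      PresentedGroup.of 0 ^ (-m) * (PresentedGroup.of 1)⁻¹ = 1 := by
  have h1 : (PresentedGroup.of 0 : BS n m) ^ n * PresentedGroup.of 1 *
      PresentedGroup.of 0 ^ (-m) * (PresentedGroup.of 1)⁻¹ =
      PresentedGroup.mk (BSRel n m) (bsRelWord n m) := by
    simp only [bsRelWord, map_mul, map_zpow, map_inv]
    rfl
  rw [h1]
  have hmem : bsRelWord n m ∈ Subgroup.normalClosure (BSRel n m) :=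
    Subgroup.subset_normalClosure (by rw [BSRel]; exact Set.mem_singleton _)
  exact (QuotientGroup.eq_one_iff _).mpr hmem

lemma bs_hom_mem {H : Type*} [Group H] (φ : BS n m →* H) (S : Subgroup H)
    (h0 : φ (PresentedGroup.of 0) ∈ S) (h1 : φ (PresentedGroup.of 1) ∈ S) (g : BS n m) :
    φ g ∈ S := by
  have htop : Subgroup.closure (Set.range (PresentedGroup.of : Fin 2 → BS n m)) = ⊤ :=
    PresentedGroup.closure_range_of _
  have hle : (⊤ : Subgroup (BS n m)) ≤ S.comap φ := by
    rw [← htop]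
    apply (Subgroup.closure_le _).mpr
    rintro x ⟨i, rfl⟩
    fin_cases i
    · exact h0
    · exact h1
  exact hle trivial

end BSgeneral



/-! ### The main construction -/

section Main

variable (p q : ℕ) (n m : ℤ) [NeZero q]

/-- `M` embedded in `V = ℚ → M` as constant functions. -/
def iota : (Fin q → ZMod p) →ₗ[ZMod p] (ℚ → (Fin q → ZMod p)) where
  toFun v := fun _ => v
  map_add' _ _ := rfl
  map_smul' _ _ := rfl

lemma iota_injective : Function.Injective (iota p q) := fun _ _ h => congrFun h 0

/-- The difference map `V → W`, whose kernel is the constants. -/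
def der : (ℚ → (Fin q → ZMod p)) →ₗ[ZMod p] ((ℚ × ℚ) → (Fin q → ZMod p)) where
  toFun P := fun z => P z.1 - P z.2
  map_add' P Q := by
    funext z
    show (P z.1 + Q z.1) - (P z.2 + Q z.2) = (P z.1 - P z.2) + (Q z.1 - Q z.2)
    abel
  map_smul' c P := by
    funext z
    show c • P z.1 - c • P z.2 = c • (P z.1 - P z.2)
    rw [smul_sub]

lemma der_iota (v : Fin q → ZMod p) : der p q (iota p q v) = 0 := by
  funext z
  show v - v = 0
  rw [sub_self]

lemma eq_iota_of_der_eq_zero {P : ℚ → (Fin q → ZMod p)} (h : der p q P = 0) :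
    P = iota p q (P 0) := by
  funext x
  have := congrFun h (x, 0)
  show P x = P 0
  simpa [der, sub_eq_zero] using this

/-- The basis vector `e₀`. -/
def e0 : Fin q → ZMod p := Pi.single 0 1

/-- The "Euler cocycle" translation part for the generator `t`. -/
def theta0 : ℚ → (Fin q → ZMod p) := fun x => (-(⌊x / (n : ℚ)⌋)) • e0 p q

lemma theta0_shift (hn : n ≠ 0) (x : ℚ) :
    theta0 p q n (x - (n : ℚ)) = theta0 p q n x + e0 p q := by
  have hn' : (n : ℚ) ≠ 0 := by exact_mod_cast hn
  rw [theta0, theta0, sub_div, div_self hn', Int.floor_sub_one]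
  have h2 : (-(⌊x / (n : ℚ)⌋ - 1)) = -⌊x / (n : ℚ)⌋ + 1 := by ring
  rw [h2, add_smul, one_smul]

/-- The operators. -/
def La : (ℚ → (Fin q → ZMod p)) ≃ₗ[ZMod p] (ℚ → (Fin q → ZMod p)) := Lgen p q ℚ 1

def La' : ((ℚ × ℚ) → (Fin q → ZMod p)) ≃ₗ[ZMod p] ((ℚ × ℚ) → (Fin q → ZMod p)) :=
  Lgen p q (ℚ × ℚ) (1, 1)

def Lt (hn : n ≠ 0) (hm : m ≠ 0) :
    (ℚ → (Fin q → ZMod p)) ≃ₗ[ZMod p] (ℚ → (Fin q → ZMod p)) :=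
  dilTHom (ZMod p) (Fin q → ZMod p) ℚ (s0 n m hn hm)

def Lt' (hn : n ≠ 0) (hm : m ≠ 0) :
    ((ℚ × ℚ) → (Fin q → ZMod p)) ≃ₗ[ZMod p] ((ℚ × ℚ) → (Fin q → ZMod p)) :=
  dilTHom (ZMod p) (Fin q → ZMod p) (ℚ × ℚ) (s0 n m hn hm)

/-- The representation of `BS n m` on `M` (as linear automorphisms). -/
def rhoM (hqn : (q : ℤ) ∣ n) (hqm : (q : ℤ) ∣ m) :
    BS n m →* ((Fin q → ZMod p) ≃ₗ[ZMod p] (Fin q → ZMod p)) :=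
  bsHom (sgm p q) 1 (by
    rw [sgm_zpow_eq_one p q hqn, sgm_zpow_eq_one p q (dvd_neg.mpr hqm)]
    simp)

/-- The action of `BS n m` on `V`. -/
def rhoV (hn : n ≠ 0) (hm : m ≠ 0) (hqn : (q : ℤ) ∣ n) (hqm : (q : ℤ) ∣ m) :
    BS n m →* ((ℚ → (Fin q → ZMod p)) ≃ₗ[ZMod p] (ℚ → (Fin q → ZMod p))) :=
  bsHom (La p q) (Lt p q n m hn hm) (relator_gen p q ℚ hn hm hqn hqm 1)

@[simp] lemma rhoM_a (hqn : (q : ℤ) ∣ n) (hqm : (q : ℤ) ∣ m) :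
    rhoM p q n m hqn hqm (PresentedGroup.of 0) = sgm p q := bsHom_a _ _ _
@[simp] lemma rhoM_t (hqn : (q : ℤ) ∣ n) (hqm : (q : ℤ) ∣ m) :
    rhoM p q n m hqn hqm (PresentedGroup.of 1) = 1 := bsHom_t _ _ _
@[simp] lemma rhoV_a (hn : n ≠ 0) (hm : m ≠ 0) (hqn : (q : ℤ) ∣ n) (hqm : (q : ℤ) ∣ m) :
    rhoV p q n m hn hm hqn hqm (PresentedGroup.of 0) = La p q := bsHom_a _ _ _
@[simp] lemma rhoV_t (hn : n ≠ 0) (hm : m ≠ 0) (hqn : (q : ℤ) ∣ n) (hqm : (q : ℤ) ∣ m) :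
    rhoV p q n m hn hm hqn hqm (PresentedGroup.of 1) = Lt p q n m hn hm := bsHom_t _ _ _

/-- The translation part of the `t`-action on `W`. -/
def thetaW : (ℚ × ℚ) → (Fin q → ZMod p) := der p q (theta0 p q n)

lemma La'_zpow_theta (hn : n ≠ 0) (hqn : (q : ℤ) ∣ n) :
    (La' p q ^ n) (thetaW p q n) = thetaW p q n := by
  rw [La', Lgen_zpow_dvd p q (ℚ × ℚ) (1, 1) hqn]
  funext z
  rw [preTHom_apply]
  have hz : z - n • ((1 : ℚ), (1 : ℚ)) = (z.1 - (n : ℚ), z.2 - (n : ℚ)) := by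
    have h3 : n • ((1 : ℚ), (1 : ℚ)) = ((n : ℚ), (n : ℚ)) := by
      rw [Prod.smul_def]
      norm_num
    rw [h3]
    rfl
  rw [hz]
  show theta0 p q n (z.1 - (n:ℚ)) - theta0 p q n (z.2 - (n:ℚ)) =
    theta0 p q n z.1 - theta0 p q n z.2
  rw [theta0_shift p q n hn, theta0_shift p q n hn]
  abel

/-- The quotient affine action of `BS n m` on `W`. -/
def ThetaW (hn : n ≠ 0) (hm : m ≠ 0) (hqn : (q : ℤ) ∣ n) (hqm : (q : ℤ) ∣ m) :
    BS n m →* ((ℚ × ℚ) → (Fin q → ZMod p)) ≃ᵃ[ZMod p] ((ℚ × ℚ) → (Fin q → ZMod p)) :=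
  bsHom (afe _ _ 0 (La' p q)) (afe _ _ (thetaW p q n) (Lt' p q n m hn hm)) (by
    rw [afe_lin_zpow, afe_lin_zpow, afe_inv, afe_mul, afe_mul, afe_mul]
    have hrel : La' p q ^ n * Lt' p q n m hn hm * La' p q ^ (-m) * (Lt' p q n m hn hm)⁻¹ = 1 :=
      relator_gen p q (ℚ × ℚ) hn hm hqn hqm (1, 1)
    have happ : (La' p q ^ n * Lt' p q n m hn hm * La' p q ^ (-m))
        (-( (Lt' p q n m hn hm)⁻¹ (thetaW p q n))) = - thetaW p q n := by
      rw [map_neg]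
      have h4 : (La' p q ^ n * Lt' p q n m hn hm * La' p q ^ (-m))
          ((Lt' p q n m hn hm)⁻¹ (thetaW p q n)) =
          (La' p q ^ n * Lt' p q n m hn hm * La' p q ^ (-m) * (Lt' p q n m hn hm)⁻¹)
          (thetaW p q n) := rfl
      rw [h4, hrel]
      rfl
    rw [happ]
    have hv : (0 : (ℚ × ℚ) → (Fin q → ZMod p)) + (La' p q ^ n) (thetaW p q n) +
        (La' p q ^ n * Lt' p q n m hn hm) 0 + - thetaW p q n = 0 := by
      rw [La'_zpow_theta p q n hn hqn, map_zero]
      abel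
    rw [hv, hrel]
    exact afe_one _ _)

@[simp] lemma ThetaW_a (hn : n ≠ 0) (hm : m ≠ 0) (hqn : (q : ℤ) ∣ n) (hqm : (q : ℤ) ∣ m) :
    ThetaW p q n m hn hm hqn hqm (PresentedGroup.of 0) = afe _ _ 0 (La' p q) := bsHom_a _ _ _
@[simp] lemma ThetaW_t (hn : n ≠ 0) (hm : m ≠ 0) (hqn : (q : ℤ) ∣ n) (hqm : (q : ℤ) ∣ m) :
    ThetaW p q n m hn hm hqn hqm (PresentedGroup.of 1) =
      afe _ _ (thetaW p q n) (Lt' p q n m hn hm) := bsHom_t _ _ _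


lemma affine_decomp {R X : Type} [CommRing R] [AddCommGroup X] [Module R X]
    (γ : X ≃ᵃ[R] X) (x : X) : γ x = γ.linear x + γ 0 := by
  have h := congrFun (AffineMap.decomp (γ.toAffineMap)) x
  simpa using h

lemma der_La (P : ℚ → (Fin q → ZMod p)) : der p q (La p q P) = La' p q (der p q P) := by
  funext z
  show sgm p q (P (z.1 - 1)) - sgm p q (P (z.2 - 1)) =
    sgm p q ((der p q P) (z - ((1:ℚ), (1:ℚ))))
  rw [← map_sub]
  rfl

lemma der_Lt (hn : n ≠ 0) (hm : m ≠ 0) (P : ℚ → (Fin q → ZMod p)) :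
    der p q (Lt p q n m hn hm P) = Lt' p q n m hn hm (der p q P) := by
  funext z
  rfl

/-- Compatibility of the `V`-action with the inclusion of constants. -/
lemma rhoV_iota (hn : n ≠ 0) (hm : m ≠ 0) (hqn : (q : ℤ) ∣ n) (hqm : (q : ℤ) ∣ m)
    (g : BS n m) (v : Fin q → ZMod p) :
    rhoV p q n m hn hm hqn hqm g (iota p q v) = iota p q (rhoM p q n m hqn hqm g v) := by
  let S : Subgroup (((Fin q → ZMod p) ≃ₗ[ZMod p] (Fin q → ZMod p)) ×
      ((ℚ → (Fin q → ZMod p)) ≃ₗ[ZMod p] (ℚ → (Fin q → ZMod p)))) :=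
    { carrier := {ef | ∀ w, ef.2 (iota p q w) = iota p q (ef.1 w)}
      one_mem' := fun _ => rfl
      mul_mem' := by
        intro a b ha hb
        intro w
        show a.2 (b.2 (iota p q w)) = iota p q (a.1 (b.1 w))
        rw [hb, ha]
      inv_mem' := by
        intro a ha
        intro w
        show a.2.symm (iota p q w) = iota p q (a.1.symm w)
        apply a.2.injective
        rw [a.2.apply_symm_apply]
        have := ha (a.1.symm w)
        rw [this, a.1.apply_symm_apply] }
  have hmem : ∀ g : BS n m,
      ((rhoM p q n m hqn hqm).prod (rhoV p q n m hn hm hqn hqm)) g ∈ S := by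
    intro g
    apply bs_hom_mem
    · have h : (((rhoM p q n m hqn hqm).prod (rhoV p q n m hn hm hqn hqm))
          (PresentedGroup.of 0)) = (sgm p q, La p q) := by
        simp [MonoidHom.prod_apply]
      rw [h]
      intro w
      rfl
    · have h : (((rhoM p q n m hqn hqm).prod (rhoV p q n m hn hm hqn hqm))
          (PresentedGroup.of 1)) = (1, Lt p q n m hn hm) := by
        simp [MonoidHom.prod_apply]
      rw [h]
      intro w
      rfl
  exact hmem g v

/-- Compatibility of the `V`-action with `der` and the `W`-affine action. -/
lemma der_rhoV (hn : n ≠ 0) (hm : m ≠ 0) (hqn : (q : ℤ) ∣ n) (hqm : (q : ℤ) ∣ m)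
    (g : BS n m) (P : ℚ → (Fin q → ZMod p)) :
    der p q (rhoV p q n m hn hm hqn hqm g P) =
      (ThetaW p q n m hn hm hqn hqm g).linear (der p q P) := by
  let S : Subgroup (((ℚ → (Fin q → ZMod p)) ≃ₗ[ZMod p] (ℚ → (Fin q → ZMod p))) ×
      (((ℚ × ℚ) → (Fin q → ZMod p)) ≃ₗ[ZMod p] ((ℚ × ℚ) → (Fin q → ZMod p)))) :=
    { carrier := {ef | ∀ Q, der p q (ef.1 Q) = ef.2 (der p q Q)}
      one_mem' := fun _ => rfl
      mul_mem' := by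
        intro a b ha hb
        intro Q
        show der p q (a.1 (b.1 Q)) = a.2 (b.2 (der p q Q))
        rw [← hb, ← ha]
      inv_mem' := by
        intro a ha
        intro Q
        show der p q (a.1.symm Q) = a.2.symm (der p q Q)
        apply a.2.injective
        rw [a.2.apply_symm_apply, ← ha, a.1.apply_symm_apply] }
  have hmem : ∀ g : BS n m,
      ((rhoV p q n m hn hm hqn hqm).prod
        ((AffineEquiv.linearHom).comp (ThetaW p q n m hn hm hqn hqm))) g ∈ S := by
    intro g
    apply bs_hom_mem
    · have h : (((rhoV p q n m hn hm hqn hqm).prod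
          ((AffineEquiv.linearHom).comp (ThetaW p q n m hn hm hqn hqm))) (PresentedGroup.of 0)) =
          (La p q, (afe _ _ 0 (La' p q)).linear) := by
        simp [MonoidHom.prod_apply]
      rw [h]
      intro Q
      show der p q (La p q Q) = (afe _ _ 0 (La' p q)).linear (der p q Q)
      rw [afe_linear]
      exact der_La p q Q
    · have h : (((rhoV p q n m hn hm hqn hqm).prod
          ((AffineEquiv.linearHom).comp (ThetaW p q n m hn hm hqn hqm))) (PresentedGroup.of 1)) =
          (Lt p q n m hn hm, (afe _ _ (thetaW p q n) (Lt' p q n m hn hm)).linear) := by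
        simp [MonoidHom.prod_apply]
      rw [h]
      intro Q
      show der p q (Lt p q n m hn hm Q) =
        (afe _ _ (thetaW p q n) (Lt' p q n m hn hm)).linear (der p q Q)
      rw [afe_linear]
      exact der_Lt p q n m hn hm Q
  exact hmem g P

/-- The translation parts of the `W`-affine action lie in the range of `der`. -/
lemma thetaW_mem_range (hn : n ≠ 0) (hm : m ≠ 0) (hqn : (q : ℤ) ∣ n) (hqm : (q : ℤ) ∣ m)
    (g : BS n m) :
    ∃ P : ℚ → (Fin q → ZMod p), der p q P = ThetaW p q n m hn hm hqn hqm g 0 := by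
  let D : Submodule (ZMod p) ((ℚ × ℚ) → (Fin q → ZMod p)) := LinearMap.range (der p q)
  let S : Subgroup (((ℚ × ℚ) → (Fin q → ZMod p)) ≃ᵃ[ZMod p] ((ℚ × ℚ) → (Fin q → ZMod p))) :=
    { carrier := {γ | (∀ u ∈ D, γ.linear u ∈ D) ∧ (∀ u ∈ D, γ.linear.symm u ∈ D) ∧ γ 0 ∈ D}
      one_mem' := by
        refine ⟨fun u hu => ?_, fun u hu => ?_, ?_⟩
        · exact hu
        · exact hu
        · simpa using D.zero_mem
      mul_mem' := by
        intro a b ⟨ha1, ha2, ha3⟩ ⟨hb1, hb2, hb3⟩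
        refine ⟨fun u hu => ?_, fun u hu => ?_, ?_⟩
        · show a.linear (b.linear u) ∈ D
          exact ha1 _ (hb1 _ hu)
        · show b.linear.symm (a.linear.symm u) ∈ D
          exact hb2 _ (ha2 _ hu)
        · show a (b 0) ∈ D
          rw [affine_decomp a (b 0)]
          exact D.add_mem (ha1 _ hb3) ha3
      inv_mem' := by
        intro a ⟨ha1, ha2, ha3⟩
        have hlin : (a⁻¹).linear = a.linear.symm := (AffineEquiv.linear_symm a)
        refine ⟨fun u hu => ?_, fun u hu => ?_, ?_⟩
        · rw [hlin]
          exact ha2 _ hu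
        · show a.linear.symm.symm u ∈ D
          rw [LinearEquiv.symm_symm]
          exact ha1 _ hu
        · have h0 : a (a⁻¹ 0) = 0 := a.apply_symm_apply 0
          rw [affine_decomp a (a⁻¹ 0)] at h0
          have h1 : a.linear (a⁻¹ 0) = -(a 0) := eq_neg_of_add_eq_zero_left h0
          have h2 : a⁻¹ 0 = a.linear.symm (-(a 0)) := by
            rw [← h1, LinearEquiv.symm_apply_apply]
          rw [h2]
          exact ha2 _ (D.neg_mem ha3) }
  have hmem : ∀ g : BS n m, ThetaW p q n m hn hm hqn hqm g ∈ S := by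
    intro g
    apply bs_hom_mem
    · rw [ThetaW_a]
      refine ⟨fun u hu => ?_, fun u hu => ?_, ?_⟩
      · obtain ⟨P, rfl⟩ := hu
        rw [afe_linear]
        exact ⟨La p q P, (der_La p q P).symm⟩
      · obtain ⟨P, rfl⟩ := hu
        rw [afe_linear]
        refine ⟨(La p q).symm P, ?_⟩
        apply (La' p q).injective
        rw [LinearEquiv.apply_symm_apply, ← der_La, LinearEquiv.apply_symm_apply]
      · show afe _ _ 0 (La' p q) 0 ∈ D
        rw [afe_apply]
        simpa using D.zero_mem
    · rw [ThetaW_t]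
      refine ⟨fun u hu => ?_, fun u hu => ?_, ?_⟩
      · obtain ⟨P, rfl⟩ := hu
        rw [afe_linear]
        exact ⟨Lt p q n m hn hm P, (der_Lt p q n m hn hm P).symm⟩
      · obtain ⟨P, rfl⟩ := hu
        rw [afe_linear]
        refine ⟨(Lt p q n m hn hm).symm P, ?_⟩
        apply (Lt' p q n m hn hm).injective
        rw [LinearEquiv.apply_symm_apply, ← der_Lt, LinearEquiv.apply_symm_apply]
      · show afe _ _ (thetaW p q n) (Lt' p q n m hn hm) 0 ∈ D
        rw [afe_apply, map_zero, add_zero]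
        exact ⟨theta0 p q n, rfl⟩
  obtain ⟨-, -, h3⟩ := hmem g
  exact h3


/-- A set-theoretic "primitive" of the translation parts. -/
noncomputable def sigmaF (hn : n ≠ 0) (hm : m ≠ 0) (hqn : (q : ℤ) ∣ n) (hqm : (q : ℤ) ∣ m)
    (g : BS n m) : ℚ → (Fin q → ZMod p) :=
  Classical.choose (thetaW_mem_range p q n m hn hm hqn hqm g)

lemma der_sigmaF (hn : n ≠ 0) (hm : m ≠ 0) (hqn : (q : ℤ) ∣ n) (hqm : (q : ℤ) ∣ m)
    (g : BS n m) :
    der p q (sigmaF p q n m hn hm hqn hqm g) = ThetaW p q n m hn hm hqn hqm g 0 :=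
  Classical.choose_spec (thetaW_mem_range p q n m hn hm hqn hqm g)

/-- The twisted coboundary of `sigmaF`; it is a constant function. -/
noncomputable def FF (hn : n ≠ 0) (hm : m ≠ 0) (hqn : (q : ℤ) ∣ n) (hqm : (q : ℤ) ∣ m)
    (g h : BS n m) : ℚ → (Fin q → ZMod p) :=
  rhoV p q n m hn hm hqn hqm g (sigmaF p q n m hn hm hqn hqm h) -
    sigmaF p q n m hn hm hqn hqm (g * h) + sigmaF p q n m hn hm hqn hqm g

lemma der_FF (hn : n ≠ 0) (hm : m ≠ 0) (hqn : (q : ℤ) ∣ n) (hqm : (q : ℤ) ∣ m)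
    (g h : BS n m) : der p q (FF p q n m hn hm hqn hqm g h) = 0 := by
  rw [FF, map_add, map_sub, der_rhoV, der_sigmaF, der_sigmaF, der_sigmaF]
  have hmul : ThetaW p q n m hn hm hqn hqm (g * h) 0 =
      (ThetaW p q n m hn hm hqn hqm g).linear (ThetaW p q n m hn hm hqn hqm h 0) +
        ThetaW p q n m hn hm hqn hqm g 0 := by
    rw [map_mul]
    exact affine_decomp (ThetaW p q n m hn hm hqn hqm g) (ThetaW p q n m hn hm hqn hqm h 0)
  rw [hmul]
  abel

/-- The 2-cocycle. -/
noncomputable def ffun (hn : n ≠ 0) (hm : m ≠ 0) (hqn : (q : ℤ) ∣ n) (hqm : (q : ℤ) ∣ m)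
    (g h : BS n m) : Fin q → ZMod p :=
  FF p q n m hn hm hqn hqm g h 0

lemma iota_ffun (hn : n ≠ 0) (hm : m ≠ 0) (hqn : (q : ℤ) ∣ n) (hqm : (q : ℤ) ∣ m)
    (g h : BS n m) :
    iota p q (ffun p q n m hn hm hqn hqm g h) = FF p q n m hn hm hqn hqm g h :=
  (eq_iota_of_der_eq_zero p q (der_FF p q n m hn hm hqn hqm g h)).symm

/-- The representation of the theorem. -/
def rho (hqn : (q : ℤ) ∣ n) (hqm : (q : ℤ) ∣ m) :
    Representation (ZMod p) (BS n m) (Fin q → ZMod p) :=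
  (LinearEquiv.automorphismGroup.toLinearMapMonoidHom).comp (rhoM p q n m hqn hqm)

lemma rho_apply (hqn : (q : ℤ) ∣ n) (hqm : (q : ℤ) ∣ m) (g : BS n m) (v : Fin q → ZMod p) :
    rho p q n m hqn hqm g v = rhoM p q n m hqn hqm g v := rfl

lemma ffun_cocycle (hn : n ≠ 0) (hm : m ≠ 0) (hqn : (q : ℤ) ∣ n) (hqm : (q : ℤ) ∣ m)
    (g h j : BS n m) :
    rhoM p q n m hqn hqm g (ffun p q n m hn hm hqn hqm h j) -
      ffun p q n m hn hm hqn hqm (g * h) j + ffun p q n m hn hm hqn hqm g (h * j) -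
      ffun p q n m hn hm hqn hqm g h = 0 := by
  apply iota_injective p q
  rw [map_sub, map_add, map_sub, map_zero, ← rhoV_iota p q n m hn hm, iota_ffun, iota_ffun, iota_ffun,
    iota_ffun]
  have h1 : rhoV p q n m hn hm hqn hqm (g * h) (sigmaF p q n m hn hm hqn hqm j) =
      rhoV p q n m hn hm hqn hqm g (rhoV p q n m hn hm hqn hqm h
        (sigmaF p q n m hn hm hqn hqm j)) := by
    rw [map_mul]
    rfl
  have h2 : g * (h * j) = (g * h) * j := (mul_assoc g h j).symm
  simp only [FF, map_sub, map_add, h1, h2]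
  abel

lemma aux_ab {V : Type} [AddCommGroup V] {A B C A' B' C' : V}
    (h : A - B + C = A' - B' + C') : B - B' = (A - A') + (C - C') := by
  have h2 : (B - B') - ((A - A') + (C - C')) = -((A - B + C) - (A' - B' + C')) := by abel
  rw [h, sub_self, neg_zero] at h2
  exact sub_eq_zero.mp h2


set_option maxHeartbeats 1000000 in
lemma no_coboundary [Fact (1 < p)] (hq2 : 2 ≤ q)
    (hn : n ≠ 0) (hm : m ≠ 0) (hqn : (q : ℤ) ∣ n) (hqm : (q : ℤ) ∣ m)
    (x : BS n m → (Fin q → ZMod p))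
    (hx : ∀ g h : BS n m,
      rhoM p q n m hqn hqm g (x h) - x (g * h) + x g = ffun p q n m hn hm hqn hqm g h) :
    False := by
  classical
  -- abbreviations
  have key : ∀ g h : BS n m,
      sigmaF p q n m hn hm hqn hqm (g * h) - iota p q (x (g * h)) =
      (sigmaF p q n m hn hm hqn hqm g - iota p q (x g)) +
        rhoV p q n m hn hm hqn hqm g
          (sigmaF p q n m hn hm hqn hqm h - iota p q (x h)) := by
    intro g h
    have e2 : iota p q (ffun p q n m hn hm hqn hqm g h) =
        rhoV p q n m hn hm hqn hqm g (sigmaF p q n m hn hm hqn hqm h) -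
          sigmaF p q n m hn hm hqn hqm (g * h) + sigmaF p q n m hn hm hqn hqm g :=
      iota_ffun p q n m hn hm hqn hqm g h
    have e3 : iota p q (ffun p q n m hn hm hqn hqm g h) =
        rhoV p q n m hn hm hqn hqm g (iota p q (x h)) - iota p q (x (g * h)) +
          iota p q (x g) := by
      rw [← hx g h, map_add, map_sub, rhoV_iota]
    have e1 := e2.symm.trans e3
    have e4 := aux_ab e1
    rw [← map_sub] at e4
    rw [e4, add_comm]
  let Θ : BS n m →* ((ℚ → (Fin q → ZMod p)) ≃ᵃ[ZMod p] (ℚ → (Fin q → ZMod p))) :=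
    MonoidHom.mk'
      (fun g => afe _ _ (sigmaF p q n m hn hm hqn hqm g - iota p q (x g))
        (rhoV p q n m hn hm hqn hqm g))
      (by
        intro g h
        rw [afe_mul, key g h, map_mul])
  have hΘ1 : Θ ((PresentedGroup.of 0 : BS n m) ^ n * PresentedGroup.of 1 *
      PresentedGroup.of 0 ^ (-m) * (PresentedGroup.of 1)⁻¹) = 1 := by
    rw [bs_relator_eq_one, map_one]
  rw [map_mul, map_mul, map_mul, map_zpow, map_zpow, map_inv] at hΘ1
  -- σF(a) is constant
  have hda : der p q (sigmaF p q n m hn hm hqn hqm (PresentedGroup.of 0)) = 0 := by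
    rw [der_sigmaF, ThetaW_a, afe_apply, map_zero, add_zero]
  have ha0 : sigmaF p q n m hn hm hqn hqm (PresentedGroup.of 0) =
      iota p q (sigmaF p q n m hn hm hqn hqm (PresentedGroup.of 0) 0) :=
    eq_iota_of_der_eq_zero p q hda
  set u : Fin q → ZMod p :=
    sigmaF p q n m hn hm hqn hqm (PresentedGroup.of 0) 0 - x (PresentedGroup.of 0) with hu
  have hΘa : Θ (PresentedGroup.of 0) = afe _ _ (iota p q u) (La p q) := by
    show afe _ _ (sigmaF p q n m hn hm hqn hqm (PresentedGroup.of 0) -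
      iota p q (x (PresentedGroup.of 0))) (rhoV p q n m hn hm hqn hqm (PresentedGroup.of 0)) = _
    rw [rhoV_a, hu, map_sub, ← ha0]
  -- σF(t) = theta0 + const
  have hdt : der p q (sigmaF p q n m hn hm hqn hqm (PresentedGroup.of 1) - theta0 p q n) = 0 := by
    rw [map_sub, der_sigmaF, ThetaW_t, afe_apply, map_zero, add_zero]
    exact sub_self _
  set c : ℚ → (Fin q → ZMod p) :=
    sigmaF p q n m hn hm hqn hqm (PresentedGroup.of 1) - theta0 p q n with hc
  have h5c : c = iota p q (c 0) := eq_iota_of_der_eq_zero p q hdt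
  set w : Fin q → ZMod p := c 0 - x (PresentedGroup.of 1) with hw
  have hΘt : Θ (PresentedGroup.of 1) =
      afe _ _ (theta0 p q n + iota p q w) (Lt p q n m hn hm) := by
    show afe _ _ (sigmaF p q n m hn hm hqn hqm (PresentedGroup.of 1) -
      iota p q (x (PresentedGroup.of 1))) (rhoV p q n m hn hm hqn hqm (PresentedGroup.of 1)) = _
    rw [rhoV_t]
    congr 1
    rw [hw, map_sub, ← h5c, hc]
    abel
  -- compatibility of powers of La with iota
  have hLaPow : ∀ (i : ℕ) (v : Fin q → ZMod p),
      (La p q ^ i) (iota p q v) = iota p q ((sgm p q ^ i) v) := by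
    intro i v
    have h5 := rhoV_iota p q n m hn hm hqn hqm ((PresentedGroup.of 0) ^ i) v
    rw [map_pow, map_pow, rhoV_a, rhoM_a] at h5
    exact h5
  -- the orbit sum
  set Ju : Fin q → ZMod p := ∑ i ∈ Finset.range q, (sgm p q ^ i) u with hJu
  have hq1 : (afe (ZMod p) (ℚ → (Fin q → ZMod p)) (iota p q u) (La p q)) ^ q =
      afe _ _ (iota p q Ju) (La p q ^ q) := by
    rw [afe_pow, hJu, map_sum]
    congr 1
    exact Finset.sum_congr rfl fun i _ => hLaPow i u
  have hJfix : (La p q ^ q) (iota p q Ju) = iota p q Ju := by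
    rw [hLaPow, sgm_pow_q]
    rfl
  have hsplit : afe (ZMod p) (ℚ → (Fin q → ZMod p)) (iota p q Ju) (La p q ^ q) =
      afe _ _ (iota p q Ju) 1 * afe _ _ 0 (La p q ^ q) := by
    rw [afe_mul, map_zero, add_zero, one_mul]
  have hcomm : Commute (afe (ZMod p) (ℚ → (Fin q → ZMod p)) (iota p q Ju) 1)
      (afe _ _ 0 (La p q ^ q)) := by
    show _ * _ = _ * _
    rw [afe_mul, afe_mul, map_zero, add_zero, zero_add, hJfix, one_mul, mul_one]
  have hzp : ∀ z₀ : ℤ,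
      (afe (ZMod p) (ℚ → (Fin q → ZMod p)) (iota p q u) (La p q)) ^ ((q : ℤ) * z₀) =
      afe _ _ (z₀ • iota p q Ju) (La p q ^ ((q : ℤ) * z₀)) := by
    intro z₀
    rw [zpow_mul, zpow_natCast, hq1, hsplit, hcomm.mul_zpow, afe_transl_zpow, afe_lin_zpow,
      afe_mul, map_zero, add_zero, one_mul, ← zpow_natCast (La p q) q, ← zpow_mul]
  obtain ⟨n₀, hn₀⟩ := id hqn
  obtain ⟨m₀, hm₀⟩ := id hqm
  have hΘan : (Θ (PresentedGroup.of 0)) ^ n = afe _ _ (n₀ • iota p q Ju) (La p q ^ n) := by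
    rw [hΘa, hn₀, hzp]
  have hΘam : (Θ (PresentedGroup.of 0)) ^ (-m) =
      afe _ _ ((-m₀) • iota p q Ju) (La p q ^ (-m)) := by
    rw [hΘa, hm₀, neg_mul_eq_mul_neg, hzp]
  rw [hΘan, hΘam, hΘt, afe_inv, afe_mul, afe_mul, afe_mul] at hΘ1
  -- simplify the resulting translation and linear parts
  have hlin : La p q ^ n * Lt p q n m hn hm * La p q ^ (-m) * (Lt p q n m hn hm)⁻¹ = 1 :=
    relator_gen p q ℚ hn hm hqn hqm 1
  -- auxiliary facts
  have hLt_iota : ∀ v : Fin q → ZMod p, Lt p q n m hn hm (iota p q v) = iota p q v := by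
    intro v
    have h5 := rhoV_iota p q n m hn hm hqn hqm (PresentedGroup.of 1) v
    rw [rhoV_t, rhoM_t] at h5
    exact h5
  have hLaZ : ∀ (z : ℤ) (v : Fin q → ZMod p),
      (La p q ^ z) (iota p q v) = iota p q ((sgm p q ^ z) v) := by
    intro z v
    have h5 := rhoV_iota p q n m hn hm hqn hqm ((PresentedGroup.of 0) ^ z) v
    rw [map_zpow, map_zpow, rhoV_a, rhoM_a] at h5
    exact h5
  have hLan_iota : ∀ v : Fin q → ZMod p, (La p q ^ n) (iota p q v) = iota p q v := by
    intro v
    rw [hLaZ n v, sgm_zpow_eq_one p q hqn]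
    rfl
  -- the four translation pieces
  have c4 : ((La p q ^ n * Lt p q n m hn hm * La p q ^ (-m)))
      (-((Lt p q n m hn hm)⁻¹ (theta0 p q n + iota p q w))) =
      -(theta0 p q n + iota p q w) := by
    rw [map_neg]
    have h5 : (La p q ^ n * Lt p q n m hn hm * La p q ^ (-m))
        ((Lt p q n m hn hm)⁻¹ (theta0 p q n + iota p q w)) =
        (La p q ^ n * Lt p q n m hn hm * La p q ^ (-m) * (Lt p q n m hn hm)⁻¹)
        (theta0 p q n + iota p q w) := rfl
    rw [h5, hlin]
    rfl
  have c3 : (La p q ^ n * Lt p q n m hn hm) ((-m₀) • iota p q Ju) =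
      (-m₀) • iota p q Ju := by
    rw [map_zsmul]
    have h5 : (La p q ^ n * Lt p q n m hn hm) (iota p q Ju) =
        (La p q ^ n) (Lt p q n m hn hm (iota p q Ju)) := rfl
    rw [h5, hLt_iota, hLan_iota]
  have c2 : (La p q ^ n) (theta0 p q n + iota p q w) =
      theta0 p q n + iota p q (e0 p q) + iota p q w := by
    rw [map_add, hLan_iota]
    congr 1
    have h5 : La p q ^ n = preTHom (ZMod p) (Fin q → ZMod p) ℚ
        (Multiplicative.ofAdd (n • (1 : ℚ))) := by
      rw [La]
      exact Lgen_zpow_dvd p q ℚ 1 hqn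
    rw [h5]
    funext y
    rw [preTHom_apply]
    have h6 : n • (1 : ℚ) = (n : ℚ) := by
      rw [zsmul_eq_mul, mul_one]
    rw [h6, theta0_shift p q n hn y]
    rfl
  rw [c4, c3, c2] at hΘ1
  rw [hlin] at hΘ1
  have hΔ : n₀ • iota p q Ju + (theta0 p q n + iota p q (e0 p q) + iota p q w) +
      (-m₀) • iota p q Ju + -(theta0 p q n + iota p q w) =
      iota p q (e0 p q + (n₀ - m₀) • Ju) := by
    rw [map_add, map_zsmul, sub_smul, neg_smul]
    abel
  rw [hΔ] at hΘ1
  have hvec : iota p q (e0 p q + (n₀ - m₀) • Ju) = 0 :=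
    afe_transl_eq_zero _ _ _ hΘ1
  have hv : e0 p q + (n₀ - m₀) • Ju = 0 := by
    apply iota_injective p q
    rw [hvec, map_zero]
  -- coordinates
  have h10 : (1 : Fin q) ≠ 0 := by
    have hval : (1 : Fin q).val = 1 := by
      rw [Fin.val_one']
      exact Nat.mod_eq_of_lt hq2
    intro hcon
    rw [hcon] at hval
    simp at hval
  have hJeq : Ju 0 = Ju 1 := by
    rw [hJu, J_apply p q u 0, J_apply p q u 1]
  have heval0 := congrFun hv (0 : Fin q)
  have heval1 := congrFun hv (1 : Fin q)
  rw [Pi.add_apply, Pi.smul_apply, Pi.zero_apply] at heval0 heval1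
  rw [e0, Pi.single_eq_same] at heval0
  rw [e0, Pi.single_eq_of_ne h10] at heval1
  rw [hJeq] at heval0
  rw [zero_add] at heval1
  rw [heval1, add_zero] at heval0
  exact one_ne_zero heval0


open groupCohomology in
lemma main_aux [Fact (1 < p)] (hq2 : 2 ≤ q)
    (hn : n ≠ 0) (hm : m ≠ 0) (hqn : (q : ℤ) ∣ n) (hqm : (q : ℤ) ∣ m) :
    ¬ Subsingleton (groupCohomology (Rep.of (rho p q n m hqn hqm)) 2) := by
  intro hss
  set A : Rep (ZMod p) (BS n m) := Rep.of (rho p q n m hqn hqm) with hA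
  let fp : BS n m × BS n m → A :=
    fun gh => ffun p q n m hn hm hqn hqm gh.1 gh.2
  have hmem : fp ∈ groupCohomology.cocycles₂ A := by
    rw [groupCohomology.mem_cocycles₂_def]
    intro g h j
    exact ffun_cocycle p q n m hn hm hqn hqm g h j
  have hsub2 : Subsingleton (groupCohomology.H2 A) := hss
  have hcob : fp ∈ groupCohomology.coboundaries₂ A := by
    have h0 : groupCohomology.H2π A ⟨fp, hmem⟩ = 0 := Subsingleton.elim _ _
    exact (groupCohomology.H2π_eq_zero_iff _).mp h0
  obtain ⟨x, hx⟩ := hcob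
  let x' : BS n m → (Fin q → ZMod p) := x
  have hx' : ∀ g h : BS n m,
      rhoM p q n m hqn hqm g (x' h) - x' (g * h) + x' g =
        ffun p q n m hn hm hqn hqm g h := by
    intro g h
    have h1 := congrFun hx (g, h)
    exact h1
  exact no_coboundary p q n m hq2 hn hm hqn hqm x' hx'

end Main

end BSH2

/-- Two integers are *isocratic* if every prime dividing both divides them with the same
`p`-adic valuation. -/
def Isocratic (a b : ℤ) : Prop :=
  ∀ p : ℕ, p.Prime → (p : ℤ) ∣ a → (p : ℤ) ∣ b →
    padicValNat p a.natAbs = padicValNat p b.natAbs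

/-- Paper's Lemma 4.5 (FunnyModule) for a cycle of length one: if `n` and `m` are
isocratic but not coprime, `p` is a prime dividing `n·m` and `q` a prime dividing
`gcd(n,m)`, then there is a representation of `BS(n,m)` on `𝔽_p^q` with nonvanishing
second cohomology. -/
theorem BS_H2_nonvanishing_of_isocratic_not_coprime
    (n m : ℤ) (hn : n ≠ 0) (hm : m ≠ 0)
    (hiso : Isocratic n m) (hncop : ¬ IsCoprime n m)
    (p : ℕ) (hp : p.Prime) (hpdvd : (p : ℤ) ∣ n * m)
    (q : ℕ) (hq : q.Prime) (hqdvd : q ∣ Int.gcd n m) :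
    ∃ ρ : Representation (ZMod p) (BS n m) (Fin q → ZMod p),
      ¬ Subsingleton (groupCohomology (Rep.of ρ) 2) := by
  haveI : NeZero q := ⟨hq.ne_zero⟩
  haveI : Fact (1 < p) := ⟨hp.one_lt⟩
  have hq2 : 2 ≤ q := hq.two_le
  have hqn : (q : ℤ) ∣ n :=
    dvd_trans (Int.natCast_dvd_natCast.mpr hqdvd) (Int.gcd_dvd_left n m)
  have hqm : (q : ℤ) ∣ m :=
    dvd_trans (Int.natCast_dvd_natCast.mpr hqdvd) (Int.gcd_dvd_right n m)
  exact ⟨BSH2.rho p q n m hqn hqm, BSH2.main_aux p q n m hq2 hn hm hqn hqm⟩
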